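/- Let p ∈ (0,1]. Then there exists a unique γ* ∈ (0,1) satisfying log(γ*·p + 1 − p) + (γ*·p)/(γ*·p + 1 − p) = 0, and this γ* maximizes the function γ ↦ γ·p·log(1/(γ·p + 1 − p)) over (0,1); that is, for every γ ∈ (0,1), γ·p·log(1/(γ·p+1−p)) ≤ γ*·p·log(1/(γ*·p+1−p)). -/

import Mathlib

/-- There is a unique `γ* ∈ (0,1)` solving
`log(γ*p + 1 − p) + γ*p/(γ*p + 1 − p) = 0`, and it maximizes
`γ ↦ γ·p·log(1/(γp + 1 − p))` over `(0,1)`. -/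
theorem optimal_observation_length
    (p : ℝ) (hp : p ∈ Set.Ioc (0 : ℝ) 1) :
    ∃ γs : ℝ, γs ∈ Set.Ioo (0 : ℝ) 1 ∧
      Real.log (γs * p + 1 - p) + γs * p / (γs * p + 1 - p) = 0 ∧
      (∀ γ ∈ Set.Ioo (0 : ℝ) 1,
        Real.log (γ * p + 1 - p) + γ * p / (γ * p + 1 - p) = 0 → γ = γs) ∧
      (∀ γ ∈ Set.Ioo (0 : ℝ) 1,
        γ * p * Real.log (1 / (γ * p + 1 - p))
          ≤ γs * p * Real.log (1 / (γs * p + 1 - p))) := by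
  obtain ⟨hp0, hp1⟩ := hp
  set q : ℝ := 1 - p with hqdef
  have hq0 : 0 ≤ q := by rw [hqdef]; linarith
  have hq1 : q < 1 := by rw [hqdef]; linarith
  set f : ℝ → ℝ := fun x => Real.log x + 1 - q / x with hfdef
  set x₀ : ℝ := max (Real.sqrt q) (Real.exp (-2)) with hx0def
  have hx0pos : 0 < x₀ := lt_max_of_lt_right (Real.exp_pos _)
  have hqx0 : q < x₀ := by
    rcases eq_or_lt_of_le hq0 with h | h
    · rw [← h]; exact hx0pos
    · refine lt_max_of_lt_left ?_
      have h2 : Real.sqrt (q * q) < Real.sqrt q := by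
        apply Real.sqrt_lt_sqrt (by positivity)
        nlinarith
      rwa [Real.sqrt_mul_self hq0] at h2
  have hx01 : x₀ < 1 := by
    apply max_lt
    · have : Real.sqrt q < Real.sqrt 1 := Real.sqrt_lt_sqrt hq0 hq1
      rwa [Real.sqrt_one] at this
    · have : Real.exp (-2) < Real.exp 0 := Real.exp_lt_exp.2 (by norm_num)
      rwa [Real.exp_zero] at this
  have hfx0 : f x₀ < 0 := by
    rcases le_total (Real.sqrt q) (Real.exp (-2)) with h | h
    · have hx0 : x₀ = Real.exp (-2) := max_eq_right h
      have hnn : 0 ≤ q / Real.exp (-2) := by positivity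
      simp only [hfdef, hx0, Real.log_exp]
      linarith
    · have hx0 : x₀ = Real.sqrt q := max_eq_left h
      have hsq : 0 < Real.sqrt q := lt_of_lt_of_le (Real.exp_pos _) h
      have hqpos : 0 < q := Real.sqrt_pos.mp hsq
      have hne : Real.sqrt q ≠ 1 := by
        intro hone
        have : q = 1 := by
          have := Real.sq_sqrt hq0
          rw [hone] at this
          nlinarith [Real.sq_sqrt hq0]
        linarith
      have hlog : Real.log (Real.sqrt q) < Real.sqrt q - 1 :=
        Real.log_lt_sub_one_of_pos hsq hne
      have hdiv : q / Real.sqrt q = Real.sqrt q := Real.div_sqrt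
      simp only [hfdef, hx0]
      rw [hdiv]
      linarith
  have hcont : ContinuousOn f (Set.Icc x₀ 1) := by
    apply ContinuousOn.sub
    · apply ContinuousOn.add
      · apply Real.continuousOn_log.mono
        intro x hx
        simp only [Set.mem_compl_iff, Set.mem_singleton_iff]
        have : x₀ ≤ x := hx.1
        intro h0; rw [h0] at this; linarith
      · exact continuousOn_const
    · apply ContinuousOn.div continuousOn_const continuousOn_id
      intro x hx
      have : x₀ ≤ x := hx.1
      intro h0; simp only [id_eq] at h0; rw [h0] at this; linarith
  have hf1 : f 1 = 1 - q := by simp [hfdef]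
  have hmem : (0 : ℝ) ∈ Set.Ioo (f x₀) (f 1) := ⟨hfx0, by rw [hf1]; linarith⟩
  obtain ⟨xs, hxsmem, hfxs⟩ := intermediate_value_Ioo hx01.le hcont hmem
  obtain ⟨hxs0, hxs1⟩ := hxsmem
  have hxspos : 0 < xs := lt_trans hx0pos hxs0
  have hqxs : q < xs := lt_trans hqx0 hxs0
  have heq : Real.log xs + 1 - q / xs = 0 := hfxs
  -- the mono lemma for uniqueness
  have hmono : ∀ a b : ℝ, 0 < a → a < b → f a < f b := by
    intro a b ha hab
    have h1 : Real.log a < Real.log b := Real.log_lt_log ha hab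
    have h2 : q / b ≤ q / a := by
      apply div_le_div_of_nonneg_left hq0 ha hab.le
    simp only [hfdef]
    linarith
  refine ⟨(xs - q) / p, ⟨div_pos (by linarith) hp0, ?_⟩, ?_, ?_, ?_⟩
  · rw [div_lt_one hp0]; rw [hqdef]; linarith
  · have hγsp : (xs - q) / p * p = xs - q := div_mul_cancel₀ _ (ne_of_gt hp0)
    have hX : (xs - q) / p * p + 1 - p = xs := by rw [hγsp, hqdef]; ring
    rw [hX, hγsp]
    have hd : (xs - q) / xs = 1 - q / xs := by field_simp
    rw [hd]; linarith
  · intro γ hγ heqγ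
    set y : ℝ := γ * p + 1 - p with hydef
    have hyq : γ * p = y - q := by rw [hydef, hqdef]; ring
    have hy0 : 0 < y := by
      have : 0 < γ * p := mul_pos hγ.1 hp0
      rw [hydef]; rw [hqdef] at hq0; linarith
    have hfy : f y = 0 := by
      have hd : γ * p / y = 1 - q / y := by rw [hyq]; field_simp
      rw [hd] at heqγ
      simp only [hfdef]; linarith
    have hyx : y = xs := by
      rcases lt_trichotomy y xs with h | h | h
      · exact absurd (hmono y xs hy0 h) (by rw [hfy, hfxs]; simp)
      · exact h
      · exact absurd (hmono xs y hxspos h) (by rw [hfy, hfxs]; simp)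
    have : γ * p = (xs - q) / p * p := by
      rw [div_mul_cancel₀ _ (ne_of_gt hp0), hyq, hyx]
    exact mul_right_cancel₀ (ne_of_gt hp0) this
  · intro γ hγ
    set x : ℝ := γ * p + 1 - p with hxdef
    have hγp : γ * p = x - q := by rw [hxdef, hqdef]; ring
    have hqx : q < x := by
      have : 0 < γ * p := mul_pos hγ.1 hp0
      linarith [hγp]
    have hxpos : 0 < x := lt_of_le_of_lt hq0 hqx
    have hγsp : (xs - q) / p * p = xs - q := div_mul_cancel₀ _ (ne_of_gt hp0)
    have hX : (xs - q) / p * p + 1 - p = xs := by rw [hγsp, hqdef]; ring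
    rw [hX, hγp, hγsp, one_div, one_div, Real.log_inv, Real.log_inv]
    -- key facts
    have h1 : Real.log xs * xs = q - xs := by
      have h := heq
      field_simp at h
      linarith
    have h2 : (Real.log xs - Real.log x) * x ≤ xs - x := by
      have h := Real.log_le_sub_one_of_pos (div_pos hxspos hxpos)
      rw [Real.log_div (ne_of_gt hxspos) (ne_of_gt hxpos)] at h
      have h' := mul_le_mul_of_nonneg_right h hxpos.le
      have e : (xs / x - 1) * x = xs - x := by field_simp
      rw [e] at h'
      exact h'
    have hxq : (0:ℝ) ≤ x - q := by linarith
    have h2' : ((x - q) * xs) * ((Real.log xs - Real.log x) * x)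
        ≤ ((x - q) * xs) * (xs - x) :=
      mul_le_mul_of_nonneg_left h2 (by positivity)
    have e1 : (x - q) * x * (Real.log xs * xs) = (x - q) * x * (q - xs) := by
      rw [h1]
    have e2 : (xs - q) * x * (Real.log xs * xs) = (xs - q) * x * (q - xs) := by
      rw [h1]
    have hsq : (0:ℝ) ≤ q * (xs - x) ^ 2 := by positivity
    have main : ((x - q) * (-Real.log x)) * (x * xs)
        ≤ ((xs - q) * (-Real.log xs)) * (x * xs) := by
      nlinarith [h2', e1, e2, hsq]
    exact (mul_le_mul_iff_of_pos_right (by positivity : (0:ℝ) < x * xs)).mp main
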